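/- arXiv:2512.18530 — 4 statements merged into one kernel-verified Lean document; each statement's English description precedes it below -/
import Mathlib

section
/- Let φ be an analytic contraction family on g and B an analytic bracket family for φ. If c₁ and c₂ lie in Γ(g)_φ, then the pointwise bracket ε ↦ ⁅c₁(ε), c₂(ε)⁆ also lies in Γ(g)_φ. (Hence Γ(g)_φ is a Lie subalgebra of the Lie algebra of germs at 0 of analytic curves in g with pointwise bracket.) -/
open scoped Topology


private lemma analyticAt_clm_apply {X E F : Type*}
    [NormedAddCommGroup X] [NormedSpace ℝ X]
    [NormedAddCommGroup E] [NormedSpace ℝ E]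
    [NormedAddCommGroup F] [NormedSpace ℝ F]
    {f : X → (E →L[ℝ] F)} {c : X → E} {x : X}
    (hf : AnalyticAt ℝ f x) (hc : AnalyticAt ℝ c x) :
    AnalyticAt ℝ (fun y => f y (c y)) x := by
  have h := AnalyticAt.comp (f := fun y => (f y, c y)) (x := x)
    ((ContinuousLinearMap.apply ℝ F).flip.analyticAt_bilinear (f x, c x)) (hf.prod hc)
  exact h

/-- Let `φ` be an analytic contraction family on `g` and `B`
an analytic bracket family for `φ`. If `c₁`, `c₂` lie in `Γ(g)_φ`, then so does
the pointwise bracket `ε ↦ ⁅c₁ ε, c₂ ε⁆`; hence `Γ(g)_φ` is a Lie subalgebra of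
the Lie algebra of germs at `0` of analytic curves in `g`. -/
theorem germs_phi_closed_under_bracket
    {g : Type*} [NormedAddCommGroup g] [NormedSpace ℝ g] [CompleteSpace g]
    [LieRing g] [LieAlgebra ℝ g]
    (hbracket : Continuous fun p : g × g => ⁅p.1, p.2⁆)
    (φ : ℝ → (@ContinuousLinearMap ℝ ℝ _ _ (RingHom.id ℝ) g _ NormedAddCommGroup.toAddCommGroup.toAddCommMonoid g _ NormedAddCommGroup.toAddCommGroup.toAddCommMonoid NormedSpace.toModule NormedSpace.toModule))
    (hφ : AnalyticAt ℝ φ 0)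
    (hbij : ∀ ε : ℝ, ε ≠ 0 → Function.Bijective (φ ε))
    (B : ℝ → (@ContinuousLinearMap ℝ ℝ _ _ (RingHom.id ℝ) g _ NormedAddCommGroup.toAddCommGroup.toAddCommMonoid (@ContinuousLinearMap ℝ ℝ _ _ (RingHom.id ℝ) g _ NormedAddCommGroup.toAddCommGroup.toAddCommMonoid g _ NormedAddCommGroup.toAddCommGroup.toAddCommMonoid NormedSpace.toModule NormedSpace.toModule) _ _ NormedSpace.toModule _))
    (hB : AnalyticAt ℝ B 0)
    (hBφ : ∀ ε : ℝ, ε ≠ 0 → ∀ X Y : g, φ ε (B ε X Y) = ⁅φ ε X, φ ε Y⁆)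
    (c₁ c₂ : ℝ → g)
    (hc₁ : AnalyticAt ℝ c₁ 0) (hc₂ : AnalyticAt ℝ c₂ 0)
    (c₁t : ℝ → g) (hc₁t : AnalyticAt ℝ c₁t 0)
    (hc₁eq : ∀ᶠ ε in 𝓝 (0 : ℝ), c₁ ε = φ ε (c₁t ε))
    (c₂t : ℝ → g) (hc₂t : AnalyticAt ℝ c₂t 0)
    (hc₂eq : ∀ᶠ ε in 𝓝 (0 : ℝ), c₂ ε = φ ε (c₂t ε)) :
    AnalyticAt ℝ (fun ε => ⁅c₁ ε, c₂ ε⁆) 0 ∧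
    ∃ et : ℝ → g, AnalyticAt ℝ et 0 ∧
      ∀ᶠ ε in 𝓝 (0 : ℝ), ⁅c₁ ε, c₂ ε⁆ = φ ε (et ε) := by

  set et : ℝ → g := fun ε => B ε (c₁t ε) (c₂t ε) with het
  have hFanal : AnalyticAt ℝ (fun ε => φ ε (et ε)) 0 :=
    analyticAt_clm_apply hφ (analyticAt_clm_apply (analyticAt_clm_apply hB hc₁t) hc₂t)
  have hetanal : AnalyticAt ℝ et 0 := analyticAt_clm_apply (analyticAt_clm_apply hB hc₁t) hc₂t
  -- equality on the punctured neighbourhood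
  have hpunct : ∀ᶠ ε in 𝓝[≠] (0 : ℝ), ⁅c₁ ε, c₂ ε⁆ = φ ε (et ε) := by
    filter_upwards [nhdsWithin_le_nhds hc₁eq, nhdsWithin_le_nhds hc₂eq,
      self_mem_nhdsWithin] with ε h1 h2 (hne : ε ≠ 0)
    rw [h1, h2, het, ← hBφ ε hne]
  -- continuity of both sides at 0
  have hcont : ContinuousAt (fun ε => ⁅c₁ ε, c₂ ε⁆) 0 :=
    hbracket.continuousAt.comp (hc₁.continuousAt.prodMk hc₂.continuousAt)
  have hFcont : ContinuousAt (fun ε => φ ε (et ε)) 0 := hFanal.continuousAt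
  have hzero : ⁅c₁ 0, c₂ 0⁆ = φ 0 (et 0) := by
    have h1 : Filter.Tendsto (fun ε => ⁅c₁ ε, c₂ ε⁆) (𝓝[≠] (0:ℝ)) (𝓝 ⁅c₁ 0, c₂ 0⁆) :=
      hcont.continuousWithinAt.tendsto
    have h2 : Filter.Tendsto (fun ε => ⁅c₁ ε, c₂ ε⁆) (𝓝[≠] (0:ℝ)) (𝓝 (φ 0 (et 0))) :=
      (hFcont.continuousWithinAt.tendsto).congr'
        (hpunct.mono fun ε h => h.symm)
    exact tendsto_nhds_unique h1 h2
  have heq : ∀ᶠ ε in 𝓝 (0 : ℝ), ⁅c₁ ε, c₂ ε⁆ = φ ε (et ε) := by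
    rw [Filter.Eventually, ← nhdsNE_sup_pure (0:ℝ)]
    simp only [Filter.mem_sup, Filter.mem_pure]
    exact ⟨hpunct, hzero⟩
  refine ⟨hFanal.congr (heq.mono fun ε h => h.symm), et, hetanal, heq⟩
end

section
/- Let φ be an analytic contraction family on g and B an analytic bracket family for φ. For all X, Y ∈ g there exists a map d̃ : ℝ → g analytic at 0 such that ⁅φ_ε(X), φ_ε(Y)⁆ = φ_ε(B_0(X,Y)) + ε·φ_ε(d̃(ε)) for all ε in a neighbourhood of 0. (Thus the map Ψ : X ↦ (ε ↦ φ_ε(X)) is a Lie algebra homomorphism from the contraction (g, B_0) into Γ(g)_φ modulo the ideal ε·Γ(g)_φ; this is the homomorphism part of the proposition identifying the order-0 Lie algebra expansion with the contraction.) -/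
open scoped Topology

attribute [local instance 2000] NormedAddCommGroup.toAddCommGroup NormedSpace.toModule

/-- Let `φ` be an analytic contraction family on `g` and `B`
an analytic bracket family for `φ`. For all `X, Y ∈ g` there exists a map
`d̃ : ℝ → g` analytic at `0` with
`⁅φ_ε X, φ_ε Y⁆ = φ_ε (B 0 X Y) + ε • φ_ε (d̃ ε)` near `0`; thus
`Ψ : X ↦ (ε ↦ φ_ε X)` is a Lie algebra homomorphism from `(g, B 0)` into
`Γ(g)_φ` modulo the ideal `ε·Γ(g)_φ`. -/
theorem Psi_hom_modulo_epsilon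
    {g : Type*} [NormedAddCommGroup g] [NormedSpace ℝ g] [CompleteSpace g]
    [LieRing g] [LieAlgebra ℝ g]
    (hbracket : Continuous fun p : g × g => ⁅p.1, p.2⁆)
    (φ : ℝ → (g →L[ℝ] g))
    (hφ : AnalyticAt ℝ φ 0)
    (hbij : ∀ ε : ℝ, ε ≠ 0 → Function.Bijective (φ ε))
    (B : ℝ → (g →L[ℝ] g →L[ℝ] g))
    (hB : AnalyticAt ℝ B 0)
    (hBφ : ∀ ε : ℝ, ε ≠ 0 → ∀ X Y : g, φ ε (B ε X Y) = ⁅φ ε X, φ ε Y⁆) :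
    ∀ X Y : g, ∃ dt : ℝ → g, AnalyticAt ℝ dt 0 ∧
      ∀ᶠ ε in 𝓝 (0 : ℝ),
        ⁅φ ε X, φ ε Y⁆ = φ ε (B 0 X Y) + ε • φ ε (dt ε) := by
  intro X Y
  set f : ℝ → g := fun ε => B ε X Y with hf_def
  have hf : AnalyticAt ℝ f 0 := by
    have h1 : AnalyticAt ℝ (fun ε => B ε X) 0 := by
      exact ((ContinuousLinearMap.apply ℝ (g →L[ℝ] g) X).analyticAt (B 0)).comp hB
    have h2' := AnalyticAt.comp (f := fun ε => (B ε) X) (x := 0)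
      ((ContinuousLinearMap.apply ℝ g Y).analyticAt _) h1
    simpa [Function.comp_def] using h2'
  obtain ⟨p, hp⟩ := hf
  refine ⟨dslope f 0, (hp.has_fpower_series_dslope_fslope).analyticAt, ?_⟩
  -- key algebraic identity for ε ≠ 0
  have key : ∀ ε : ℝ, ε ≠ 0 → B 0 X Y + ε • dslope f 0 ε = f ε := by
    intro ε hε
    rw [dslope_of_ne f hε]
    simp only [slope_def_field, slope, vsub_eq_sub, sub_zero]
    rw [smul_inv_smul₀ hε]
    show B 0 X Y + (f ε - f 0) = f ε
    simp [hf_def]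
  -- continuity of both sides
  have hφc : ContinuousAt φ 0 := hφ.continuousAt
  have hXc : ContinuousAt (fun ε => φ ε X) 0 :=
    ((ContinuousLinearMap.apply ℝ g X).continuous.continuousAt).comp hφc
  have hYc : ContinuousAt (fun ε => φ ε Y) 0 :=
    ((ContinuousLinearMap.apply ℝ g Y).continuous.continuousAt).comp hφc
  have h1 : ContinuousAt (fun ε => ⁅φ ε X, φ ε Y⁆) 0 := by
    exact Filter.Tendsto.comp hbracket.continuousAt (hXc.prodMk hYc)
  have h2 : ContinuousAt (fun ε => φ ε (f ε)) 0 :=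
    (isBoundedBilinearMap_apply.continuous.continuousAt).comp
      (hφc.prodMk hp.analyticAt.continuousAt)
  -- equality at ε = 0 by taking limits along the punctured neighbourhood
  have h0 : ⁅φ 0 X, φ 0 Y⁆ = φ 0 (B 0 X Y) := by
    have t1 : Filter.Tendsto (fun ε => ⁅φ ε X, φ ε Y⁆) (𝓝[≠] (0:ℝ)) (𝓝 ⁅φ 0 X, φ 0 Y⁆) :=
      h1.continuousWithinAt.tendsto
    have t2 : Filter.Tendsto (fun ε => φ ε (f ε)) (𝓝[≠] (0:ℝ)) (𝓝 (φ 0 (B 0 X Y))) :=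
      h2.continuousWithinAt.tendsto
    have heq : (fun ε => ⁅φ ε X, φ ε Y⁆) =ᶠ[𝓝[≠] (0:ℝ)] (fun ε => φ ε (f ε)) := by
      filter_upwards [self_mem_nhdsWithin] with ε hε
      exact (hBφ ε hε X Y).symm
    exact tendsto_nhds_unique (t1.congr' heq) t2
  refine Filter.Eventually.of_forall fun ε => ?_
  rcases eq_or_ne ε 0 with rfl | hε
  · simpa using h0
  · calc ⁅φ ε X, φ ε Y⁆ = φ ε (f ε) := (hBφ ε hε X Y).symm
      _ = φ ε (B 0 X Y + ε • dslope f 0 ε) := by rw [key ε hε]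
      _ = φ ε (B 0 X Y) + ε • φ ε (dslope f 0 ε) := by
          rw [map_add, map_smul]
end

section
/- In the İnönü–Wigner setting, for a map c : ℝ → g analytic at 0 the following are equivalent: (i) there exists a map c̃ : ℝ → g analytic at 0 with c(ε) = φ_ε(c̃(ε)) = π(c̃(ε)) + ε·π_n(c̃(ε)) for all ε in a neighbourhood of 0; (ii) c(0) ∈ h. Hence Γ(g)_φ = {c analytic at 0 : c(0) ∈ h}; in particular this set depends only on h and not on the chosen complement n = ker π. -/
open scoped Topology

attribute [local instance high] NormedAddCommGroup.toAddCommGroup NormedSpace.toModule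

/-- In the İnönü–Wigner setting, for a map `c : ℝ → g`
analytic at `0` the following are equivalent: (i) `c` lies in `Γ(g)_φ`, i.e.
there is an analytic `c̃` with `c ε = π (c̃ ε) + ε • π_n (c̃ ε)` near `0`;
(ii) `c 0 ∈ h`. Hence `Γ(g)_φ = {c analytic at 0 : c 0 ∈ h}` depends only
on `h`. -/
theorem inonu_wigner_germ_characterisation
    {g : Type*} [NormedAddCommGroup g] [NormedSpace ℝ g] [CompleteSpace g]
    [LieRing g] [LieAlgebra ℝ g]
    (hbracket : Continuous fun p : g × g => ⁅p.1, p.2⁆)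
    (h : LieSubalgebra ℝ g)
    (π : g →L[ℝ] g)
    (hproj : ∀ x : g, π (π x) = π x)
    (hrange : ∀ x : g, π x ∈ h)
    (hfix : ∀ x ∈ h, π x = x)
    (c : ℝ → g) (hc : AnalyticAt ℝ c 0) :
    let πn : g →L[ℝ] g := ContinuousLinearMap.id ℝ g - π
    ((∃ ct : ℝ → g, AnalyticAt ℝ ct 0 ∧
        ∀ᶠ ε in 𝓝 (0 : ℝ), c ε = π (ct ε) + ε • πn (ct ε)) ↔
      c 0 ∈ h) := by
  intro πn
  constructor
  · rintro ⟨ct, -, hev⟩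
    have h0 := hev.self_of_nhds
    rw [h0]
    simpa using hrange (ct 0)
  · intro hc0
    -- `f := πn ∘ c` is analytic and vanishes at `0`.
    set f : ℝ → g := fun ε => πn (c ε) with hf
    have hfan : AnalyticAt ℝ f 0 := (πn.analyticAt (c 0)).comp hc
    have hf0 : f 0 = 0 := by
      simp [hf, πn, ContinuousLinearMap.sub_apply, hfix (c 0) hc0]
    obtain ⟨p, hp⟩ := hfan
    -- the dslope `d` of `f` at `0` is analytic and satisfies `ε • d ε = f ε`.
    set d : ℝ → g := dslope f 0 with hd
    have hdan : AnalyticAt ℝ d 0 :=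
      (hp.has_fpower_series_dslope_fslope).analyticAt
    have hkey : ∀ ε : ℝ, ε • d ε = f ε := by
      intro ε
      rcases eq_or_ne ε 0 with rfl | hε
      · simp [hf0]
      · rw [hd, dslope_of_ne f hε, slope_def_module]
        rw [hf0, sub_zero, sub_zero, smul_inv_smul₀ hε]
    -- candidate lift
    refine ⟨fun ε => π (c ε) + (d ε - π (d ε)), ?_, ?_⟩
    · exact ((π.analyticAt (c 0)).comp hc).add
        (hdan.sub ((π.analyticAt (d 0)).comp hdan))
    · filter_upwards with ε
      have hπd : π (d ε - π (d ε)) = 0 := by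
        rw [map_sub, hproj, sub_self]
      have hπ : π (π (c ε) + (d ε - π (d ε))) = π (c ε) := by
        rw [map_add, hproj, hπd, add_zero]
      have hπn : πn (π (c ε) + (d ε - π (d ε))) = d ε - π (d ε) := by
        simp only [πn, ContinuousLinearMap.sub_apply, ContinuousLinearMap.id_apply, hπ]
        abel
      rw [hπ, hπn, smul_sub, ← map_smul, hkey]
      have : f ε - π (f ε) = f ε := by
        simp [hf, πn, ContinuousLinearMap.sub_apply, map_sub, hproj]
      rw [this]
      simp [hf, πn, ContinuousLinearMap.sub_apply]
end

section
/- Let g be a real Banach space, h ⊆ g an ℝ-linear subspace, and m : g × g → g a map analytic at (0,0) with m(0,0) = 0 whose Fréchet derivative at (0,0) is the addition map (x,y) ↦ x + y. Let k ≥ 1 and let c̃, d̃ : ℝ → g be analytic at 0 with c̃(0) ∈ h and d̃(0) ∈ h. Then there exists a map ẽ : ℝ → g analytic at 0 with ẽ(0) = c̃(0) + d̃(0) (in particular ẽ(0) ∈ h) such that m(ε^k·c̃(ε), ε^k·d̃(ε)) = ε^k·ẽ(ε) for all ε in a neighbourhood of 0. -/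
open scoped Topology

open Filter Asymptotics in
/-- Divide an analytic function by `ε^k` when the quotient has a limit along
the punctured neighbourhood. -/
private lemma analytic_div_pow {g : Type*} [NormedAddCommGroup g] [NormedSpace ℝ g]
    (k : ℕ) (f : ℝ → g) (L : g) (hf : AnalyticAt ℝ f 0)
    (hlim : Filter.Tendsto (fun ε : ℝ => (ε⁻¹) ^ k • f ε) (𝓝[≠] (0:ℝ)) (𝓝 L)) :
    ∃ u : ℝ → g, AnalyticAt ℝ u 0 ∧ u 0 = L ∧ ∀ ε, f ε = ε ^ k • u ε := by
  induction k generalizing f L with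
  | zero =>
    refine ⟨f, hf, ?_, fun ε => by simp⟩
    have h1 : Filter.Tendsto f (𝓝[≠] (0:ℝ)) (𝓝 (f 0)) :=
      (hf.continuousAt.tendsto).mono_left nhdsWithin_le_nhds
    have h2 : Filter.Tendsto f (𝓝[≠] (0:ℝ)) (𝓝 L) := by
      simpa using hlim
    exact tendsto_nhds_unique h1 h2
  | succ k ih =>
    have hf0 : f 0 = 0 := by
      have h1 : Filter.Tendsto f (𝓝[≠] (0:ℝ)) (𝓝 (f 0)) :=
        (hf.continuousAt.tendsto).mono_left nhdsWithin_le_nhds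
      have h2 : Filter.Tendsto f (𝓝[≠] (0:ℝ)) (𝓝 (0:g)) := by
        have : Filter.Tendsto (fun ε : ℝ => ε ^ (k+1) • ((ε⁻¹) ^ (k+1) • f ε))
            (𝓝[≠] (0:ℝ)) (𝓝 ((0:ℝ) ^ (k+1) • L)) := by
          exact Filter.Tendsto.smul
            (((continuous_id.pow _).tendsto 0).mono_left nhdsWithin_le_nhds) hlim
        have heq : ∀ ε ∈ ({0}ᶜ : Set ℝ), ε ^ (k+1) • ((ε⁻¹) ^ (k+1) • f ε) = f ε := by
          intro ε hε
          rw [smul_smul, ← mul_pow, mul_inv_cancel₀ (by simpa using hε), one_pow, one_smul]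
        simpa [zero_pow] using this.congr' (eventually_nhdsWithin_of_forall heq)
      exact tendsto_nhds_unique h1 h2
    obtain ⟨p, hp⟩ := hf
    have hd : AnalyticAt ℝ (dslope f 0) 0 := ⟨p.fslope, hp.has_fpower_series_dslope_fslope⟩
    have hfd : ∀ ε : ℝ, f ε = ε • dslope f 0 ε := by
      intro ε
      have := sub_smul_dslope f 0 ε
      simp only [sub_zero, hf0] at this
      exact this.symm
    have hlim' : Filter.Tendsto (fun ε : ℝ => (ε⁻¹) ^ k • dslope f 0 ε) (𝓝[≠] (0:ℝ)) (𝓝 L) := by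
      refine hlim.congr' (eventually_nhdsWithin_of_forall fun ε hε => ?_)
      have hε0 : (ε:ℝ) ≠ 0 := by simpa using hε
      rw [hfd ε, pow_succ, smul_smul, mul_smul]
      rw [smul_smul, mul_assoc, inv_mul_cancel₀ hε0, mul_one]
    obtain ⟨u, hu, hu0, huε⟩ := ih (dslope f 0) L hd hlim'
    refine ⟨u, hu, hu0, fun ε => ?_⟩
    rw [hfd ε, huε ε, pow_succ, smul_smul, mul_comm, mul_smul]


/-- Let `g` be a real Banach space, `h ⊆ g` a subspace, and
`m : g × g → g` analytic at `(0,0)` with `m(0,0) = 0` and Fréchet derivative at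
`(0,0)` equal to the addition map. For `k ≥ 1` and `c̃, d̃` analytic at `0`
with `c̃ 0, d̃ 0 ∈ h`, there is `ẽ` analytic at `0` with
`ẽ 0 = c̃ 0 + d̃ 0` and `m (ε^k • c̃ ε, ε^k • d̃ ε) = ε^k • ẽ ε` near `0`.
(Key step showing `Γ(G)_H^{(k)}` is a subgroup of the germ group.) -/
theorem bch_truncation_subgroup_step
    {g : Type*} [NormedAddCommGroup g] [NormedSpace ℝ g] [CompleteSpace g]
    (h : Submodule ℝ g)
    (m : g × g → g)
    (hm : AnalyticAt ℝ m (0, 0))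
    (hm0 : m (0, 0) = 0)
    (hderiv : fderiv ℝ m (0, 0) =
      ContinuousLinearMap.fst ℝ g g + ContinuousLinearMap.snd ℝ g g)
    (k : ℕ) (hk : 1 ≤ k)
    (ct dt : ℝ → g)
    (hct : AnalyticAt ℝ ct 0) (hdt : AnalyticAt ℝ dt 0)
    (hct0 : ct 0 ∈ h) (hdt0 : dt 0 ∈ h) :
    ∃ et : ℝ → g, AnalyticAt ℝ et 0 ∧ et 0 = ct 0 + dt 0 ∧
      ∀ᶠ ε in 𝓝 (0 : ℝ),
        m (ε ^ k • ct ε, ε ^ k • dt ε) = ε ^ k • et ε := by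
  open Filter Asymptotics in
  classical
  set v : ℝ → g × g := fun ε => (ε ^ k • ct ε, ε ^ k • dt ε) with hv
  have hpow : AnalyticAt ℝ (fun ε : ℝ => ε ^ k) (0:ℝ) :=
    (analyticAt_id (𝕜 := ℝ) (z := (0:ℝ))).pow k
  have hvA : AnalyticAt ℝ v 0 := ((hpow.smul hct).prod (hpow.smul hdt))
  have hv0 : v 0 = (0, 0) := by simp [hv, zero_pow (Nat.one_le_iff_ne_zero.mp hk)]
  have hF : AnalyticAt ℝ (fun ε => m (v ε)) 0 := by
    have hm' : AnalyticAt ℝ m (v 0) := hv0 ▸ hm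
    exact hm'.comp hvA
  set D := fderiv ℝ m (0, 0) with hD
  have hDm : HasFDerivAt m D (0, 0) := hm.differentiableAt.hasFDerivAt
  have hm0' : m 0 = 0 := by rw [Prod.mk_zero_zero] at hm0; exact hm0
  have hlo : (fun w : g × g => m w - D w) =o[𝓝 (0,0)] (fun w => w) := by
    have := hasFDerivAt_iff_isLittleO_nhds_zero.mp hDm
    rw [Prod.mk_zero_zero]
    simpa [hm0', Prod.mk_zero_zero] using this
  set r : ℝ → g := fun ε => m (v ε) - D (v ε) with hr
  have hvt : Filter.Tendsto v (𝓝 0) (𝓝 (0,0)) := by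
    have := hvA.continuousAt.tendsto; rwa [hv0] at this
  have hro : r =o[𝓝 (0:ℝ)] v := hlo.comp_tendsto hvt
  have hvO : v =O[𝓝 (0:ℝ)] (fun ε => ε ^ k) := by
    have h1 : (fun ε : ℝ => (ct ε, dt ε)) =O[𝓝 (0:ℝ)] (fun _ => (1:ℝ)) :=
      (hct.prod hdt).continuousAt.isBigO_one ℝ
    have := (isBigO_refl (fun ε : ℝ => ε ^ k) (𝓝 0)).smul h1
    simpa [hv, Prod.smul_mk] using this
  have hrk : r =o[𝓝 (0:ℝ)] (fun ε => ε ^ k) := hro.trans_isBigO hvO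
  -- limit of ε⁻¹^k • r ε  is 0
  have hr0 : Filter.Tendsto (fun ε : ℝ => (ε⁻¹) ^ k • r ε) (𝓝[≠] (0:ℝ)) (𝓝 0) := by
    rw [tendsto_zero_iff_norm_tendsto_zero]
    have hdiv : Filter.Tendsto (fun ε : ℝ => ‖r ε‖ / ‖ε ^ k‖) (𝓝 (0:ℝ)) (𝓝 0) := by
      refine (isLittleO_iff_tendsto' ?_).mp (hrk.norm_norm)
      filter_upwards with ε hε
      have hε0 : ε = 0 := by
        by_contra hne
        exact hne (pow_eq_zero_iff (Nat.one_le_iff_ne_zero.mp hk) |>.mp (norm_eq_zero.mp hε))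
      subst hε0
      have : r 0 = 0 := by
        simp only [hr, hv0]
        rw [hm0]
        simp [Prod.mk_zero_zero]
      simp [this]
    refine (hdiv.mono_left nhdsWithin_le_nhds).congr' ?_
    refine eventually_nhdsWithin_of_forall fun ε hε => ?_
    simp [norm_smul, norm_pow, norm_inv, div_eq_mul_inv, inv_pow, mul_comm]
  have hlim : Filter.Tendsto (fun ε : ℝ => (ε⁻¹) ^ k • m (v ε)) (𝓝[≠] (0:ℝ))
      (𝓝 (ct 0 + dt 0)) := by
    have hmain : Filter.Tendsto (fun ε : ℝ => (ct ε + dt ε) + (ε⁻¹) ^ k • r ε) (𝓝[≠] (0:ℝ))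
        (𝓝 ((ct 0 + dt 0) + 0)) :=
      Filter.Tendsto.add
        (((hct.continuousAt.tendsto.add hdt.continuousAt.tendsto).mono_left
          nhdsWithin_le_nhds)) hr0
    rw [add_zero] at hmain
    refine hmain.congr' (eventually_nhdsWithin_of_forall fun ε hε => ?_)
    have hε0 : (ε:ℝ) ≠ 0 := hε
    have hcanc : (ε⁻¹) ^ k * ε ^ k = 1 := by
      rw [← mul_pow, inv_mul_cancel₀ hε0, one_pow]
    have hDv : D (v ε) = ε ^ k • (ct ε + dt ε) := by
      rw [hderiv]; simp [hv, smul_add]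
    have hm_eq : m (v ε) = ε ^ k • (ct ε + dt ε) + r ε := by
      simp only [hr]; rw [hDv]; abel
    show ct ε + dt ε + ε⁻¹ ^ k • r ε = ε⁻¹ ^ k • m (v ε)
    rw [hm_eq, smul_add, smul_smul, hcanc, one_smul]
  obtain ⟨et, hetA, het0, hetε⟩ := analytic_div_pow k (fun ε => m (v ε)) (ct 0 + dt 0) hF hlim
  exact ⟨et, hetA, het0, Filter.Eventually.of_forall fun ε => hetε ε⟩
end
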